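/- First family of entropy pairs: Let f : ℝ → ℝ be C² with f'(0) = 0. On U = {(σ,β) ∈ ℝ² : σ > |β|} define η₁(σ,β) = f(β−σ) + f(β+σ) and q₁(σ,β) = ∫_β^{β+σ} f'(s)/s ds − ∫_{β−σ}^{β} f'(s)/s ds + 2∫_0^{β} f'(s)/s ds. Then η₁ and q₁ are C² on U, with ∂_σ q₁(σ,β) = f'(β+σ)/(β+σ) − f'(β−σ)/(β−σ) and ∂_β q₁(σ,β) = f'(β+σ)/(β+σ) + f'(β−σ)/(β−σ), and (η₁,q₁) is an entropy pair, i.e. on U: ∂_σ q₁ = (β ∂_σ η₁ − σ ∂_β η₁)/(β² − σ²) and ∂_β q₁ = (β ∂_β η₁ − σ ∂_σ η₁)/(β² − σ²). -/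

import Mathlib

open MeasureTheory Set intervalIntegral

noncomputable section

/-- Phase-space region `U = {(σ,β) : σ > |β|}`. -/
def U : Set (ℝ × ℝ) := {p | |p.2| < p.1}

/-- `(η,q)` is an entropy pair for the γ = 3 isentropic Carrollian system:
both are C² on `U` and the gradient relations
`∂_σ q = (β ∂_σ η − σ ∂_β η)/(β² − σ²)`, `∂_β q = (β ∂_β η − σ ∂_σ η)/(β² − σ²)` hold on `U`. -/
structure IsEntropyPair (η q : ℝ → ℝ → ℝ) : Prop where
  smooth_eta : ContDiffOn ℝ 2 (fun p : ℝ × ℝ => η p.1 p.2) U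
  smooth_q : ContDiffOn ℝ 2 (fun p : ℝ × ℝ => q p.1 p.2) U
  grad_sigma : ∀ s b : ℝ, (s, b) ∈ U →
    deriv (fun s' => q s' b) s
      = (b * deriv (fun s' => η s' b) s - s * deriv (fun b' => η s b') b) / (b^2 - s^2)
  grad_beta : ∀ s b : ℝ, (s, b) ∈ U →
    deriv (fun b' => q s b') b
      = (b * deriv (fun b' => η s b') b - s * deriv (fun s' => η s' b) s) / (b^2 - s^2)

/-- The first entropy `η₁(σ,β) = f(β−σ) + f(β+σ)`. -/
def eta1 (f : ℝ → ℝ) (s b : ℝ) : ℝ := f (b - s) + f (b + s)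

/-- The first entropy flux
`q₁(σ,β) = ∫_β^{β+σ} f'(u)/u du − ∫_{β−σ}^β f'(u)/u du + 2∫_0^β f'(u)/u du`. -/
def q1flux (f : ℝ → ℝ) (s b : ℝ) : ℝ :=
  (∫ u in b..(b + s), deriv f u / u) - (∫ u in (b - s)..b, deriv f u / u)
    + 2 * ∫ u in (0:ℝ)..b, deriv f u / u

variable {f : ℝ → ℝ}

def g0 (f : ℝ → ℝ) : ℝ → ℝ := dslope (deriv f) 0
def G1 (f : ℝ → ℝ) : ℝ → ℝ := fun x => ∫ u in (0:ℝ)..x, g0 f u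

lemma hderiv1 (hf : ContDiff ℝ 2 f) : ContDiff ℝ 1 (deriv f) := by
  have h2 : ContDiff ℝ (1+1) f := by norm_num; exact hf
  exact (contDiff_succ_iff_deriv.mp h2).2.2

lemma g0_of_ne (hf0 : deriv f 0 = 0) {x : ℝ} (hx : x ≠ 0) : g0 f x = deriv f x / x := by
  rw [g0, dslope_of_ne _ hx, slope_def_field, hf0, sub_zero, sub_zero]

lemma g0_cont (hf : ContDiff ℝ 2 f) : Continuous (g0 f) := by
  rw [continuous_iff_continuousAt]
  intro x
  rcases eq_or_ne x 0 with rfl | hx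
  · exact continuousAt_dslope_same.2 (((hderiv1 hf).differentiable one_ne_zero) 0)
  · exact (continuousAt_dslope_of_ne hx).2 ((hderiv1 hf).continuous.continuousAt)

lemma G1_hasDerivAt (hf : ContDiff ℝ 2 f) (x : ℝ) : HasDerivAt (G1 f) (g0 f x) x :=
  integral_hasDerivAt_right ((g0_cont hf).intervalIntegrable _ _)
    ((g0_cont hf).stronglyMeasurableAtFilter _ _) (g0_cont hf).continuousAt

lemma G1_contDiffOn (hf : ContDiff ℝ 2 f) (hf0 : deriv f 0 = 0) :
    ContDiffOn ℝ 2 (G1 f) {x : ℝ | x ≠ 0} := by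
  have hopen : IsOpen {x : ℝ | x ≠ 0} := isOpen_ne
  have h2 : (2 : WithTop ℕ∞) = 1 + 1 := by norm_num
  rw [h2, contDiffOn_succ_iff_deriv_of_isOpen hopen]
  refine ⟨fun x _ => (G1_hasDerivAt hf x).differentiableAt.differentiableWithinAt, by simp, ?_⟩
  have heq : EqOn (deriv (G1 f)) (fun x => deriv f x / x) {x : ℝ | x ≠ 0} := by
    intro x hx
    rw [(G1_hasDerivAt hf x).deriv, g0_of_ne hf0 hx]
  refine ContDiffOn.congr ?_ heq
  exact ((hderiv1 hf).contDiffOn).div contDiffOn_id (fun x hx => hx)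

lemma q1_eq (hf : ContDiff ℝ 2 f) (hf0 : deriv f 0 = 0) (s b : ℝ) :
    q1flux f s b = G1 f (b + s) + G1 f (b - s) := by
  have hae : ∀ a c : ℝ, (∫ u in a..c, deriv f u / u) = ∫ u in a..c, g0 f u := by
    intro a c
    apply intervalIntegral.integral_congr_ae
    have h0 : ∀ᵐ u : ℝ, u ≠ 0 := by
      rw [ae_iff]; simpa using measure_singleton (0 : ℝ)
    filter_upwards [h0] with u hu _
    rw [g0_of_ne hf0 hu]
  have hint : ∀ a c : ℝ, IntervalIntegrable (g0 f) volume a c :=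
    fun a c => (g0_cont hf).intervalIntegrable a c
  have h1 : (∫ u in (0:ℝ)..b, g0 f u) + (∫ u in b..(b+s), g0 f u) = ∫ u in (0:ℝ)..(b+s), g0 f u :=
    integral_add_adjacent_intervals (hint _ _) (hint _ _)
  have h2 : (∫ u in (0:ℝ)..(b-s), g0 f u) + (∫ u in (b-s)..b, g0 f u) = ∫ u in (0:ℝ)..b, g0 f u :=
    integral_add_adjacent_intervals (hint _ _) (hint _ _)
  rw [q1flux, hae, hae, hae]
  simp only [G1]
  linarith

lemma eta1_smooth (hf : ContDiff ℝ 2 f) :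
    ContDiffOn ℝ 2 (fun p : ℝ × ℝ => eta1 f p.1 p.2) U :=
  ((hf.comp (contDiff_snd.sub contDiff_fst)).add
    (hf.comp (contDiff_snd.add contDiff_fst))).contDiffOn

lemma U_facts {s b : ℝ} (h : (s, b) ∈ U) : 0 < b + s ∧ b - s < 0 := by
  simp only [U, Set.mem_setOf_eq] at h
  have := abs_lt.mp h
  constructor <;> [linarith [this.1]; linarith [this.2]]

lemma q1_smooth (hf : ContDiff ℝ 2 f) (hf0 : deriv f 0 = 0) :
    ContDiffOn ℝ 2 (fun p : ℝ × ℝ => q1flux f p.1 p.2) U := by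
  have hrw : (fun p : ℝ × ℝ => q1flux f p.1 p.2)
      = fun p : ℝ × ℝ => G1 f (p.2 + p.1) + G1 f (p.2 - p.1) := by
    funext p; exact q1_eq hf hf0 p.1 p.2
  rw [hrw]
  have hG := G1_contDiffOn hf hf0
  have h1 : ContDiffOn ℝ 2 (fun p : ℝ × ℝ => G1 f (p.2 + p.1)) U := by
    refine hG.comp (contDiff_snd.add contDiff_fst).contDiffOn ?_
    intro p hp
    exact ne_of_gt (U_facts hp).1
  have h2 : ContDiffOn ℝ 2 (fun p : ℝ × ℝ => G1 f (p.2 - p.1)) U := by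
    refine hG.comp (contDiff_snd.sub contDiff_fst).contDiffOn ?_
    intro p hp
    exact ne_of_lt (U_facts hp).2
  exact h1.add h2

/-- **First family of entropy pairs** (Lemma 5.2, first part): for `f ∈ C²(ℝ)` with
`f'(0) = 0`, the pair `(η₁,q₁)` is C² on `U`, the partial derivatives of `q₁` are
`∂_σ q₁ = f'(β+σ)/(β+σ) − f'(β−σ)/(β−σ)` and `∂_β q₁ = f'(β+σ)/(β+σ) + f'(β−σ)/(β−σ)`,
and `(η₁,q₁)` is an entropy pair. -/
theorem first_entropy_family (f : ℝ → ℝ) (hf : ContDiff ℝ 2 f) (hf0 : deriv f 0 = 0) :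
    ContDiffOn ℝ 2 (fun p : ℝ × ℝ => eta1 f p.1 p.2) U ∧
    ContDiffOn ℝ 2 (fun p : ℝ × ℝ => q1flux f p.1 p.2) U ∧
    (∀ s b : ℝ, (s, b) ∈ U →
      deriv (fun s' => q1flux f s' b) s
        = deriv f (b + s) / (b + s) - deriv f (b - s) / (b - s) ∧
      deriv (fun b' => q1flux f s b') b
        = deriv f (b + s) / (b + s) + deriv f (b - s) / (b - s)) ∧
    IsEntropyPair (eta1 f) (q1flux f) := by
  have hdf : ∀ x : ℝ, HasDerivAt f (deriv f x) x :=
    fun x => (hf.differentiable (by norm_num) x).hasDerivAt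
  -- derivatives of q1flux
  have hqs : ∀ s b : ℝ, (s, b) ∈ U →
      deriv (fun s' => q1flux f s' b) s = deriv f (b + s) / (b + s) - deriv f (b - s) / (b - s) := by
    intro s b hU
    obtain ⟨h1, h2⟩ := U_facts hU
    have hrw : (fun s' => q1flux f s' b) = fun s' => G1 f (b + s') + G1 f (b - s') := by
      funext s'; exact q1_eq hf hf0 s' b
    have hA : HasDerivAt (fun s' => G1 f (b + s')) (g0 f (b + s) * 1) s :=
      (G1_hasDerivAt hf (b + s)).comp s ((hasDerivAt_id s).const_add b)
    have hB : HasDerivAt (fun s' => G1 f (b - s')) (g0 f (b - s) * (-1)) s :=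
      (G1_hasDerivAt hf (b - s)).comp s ((hasDerivAt_id s).const_sub b)
    rw [hrw, HasDerivAt.deriv (f := fun s' => G1 f (b + s') + G1 f (b - s')) (hA.add hB), g0_of_ne hf0 (ne_of_gt h1), g0_of_ne hf0 (ne_of_lt h2)]
    ring
  have hqb : ∀ s b : ℝ, (s, b) ∈ U →
      deriv (fun b' => q1flux f s b') b = deriv f (b + s) / (b + s) + deriv f (b - s) / (b - s) := by
    intro s b hU
    obtain ⟨h1, h2⟩ := U_facts hU
    have hrw : (fun b' => q1flux f s b') = fun b' => G1 f (b' + s) + G1 f (b' - s) := by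
      funext b'; exact q1_eq hf hf0 s b'
    have hA : HasDerivAt (fun b' => G1 f (b' + s)) (g0 f (b + s) * 1) b :=
      by simpa [Function.comp_def] using (G1_hasDerivAt hf (b + s)).comp b ((hasDerivAt_id b).add_const s)
    have hB : HasDerivAt (fun b' => G1 f (b' - s)) (g0 f (b - s) * 1) b :=
      by simpa [Function.comp_def] using (G1_hasDerivAt hf (b - s)).comp b ((hasDerivAt_id b).sub_const s)
    rw [hrw, HasDerivAt.deriv (f := fun b' => G1 f (b' + s) + G1 f (b' - s)) (hA.add hB), g0_of_ne hf0 (ne_of_gt h1), g0_of_ne hf0 (ne_of_lt h2)]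
    ring
  -- derivatives of eta1
  have hes : ∀ s b : ℝ,
      deriv (fun s' => eta1 f s' b) s = deriv f (b - s) * (-1) + deriv f (b + s) * 1 := by
    intro s b
    have hA : HasDerivAt (fun s' => f (b - s')) (deriv f (b - s) * (-1)) s :=
      (hdf (b - s)).comp s ((hasDerivAt_id s).const_sub b)
    have hB : HasDerivAt (fun s' => f (b + s')) (deriv f (b + s) * 1) s :=
      (hdf (b + s)).comp s ((hasDerivAt_id s).const_add b)
    exact (hA.add hB).deriv
  have heb : ∀ s b : ℝ,
      deriv (fun b' => eta1 f s b') b = deriv f (b - s) * 1 + deriv f (b + s) * 1 := by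
    intro s b
    have hA : HasDerivAt (fun b' => f (b' - s)) (deriv f (b - s) * 1) b :=
      (hdf (b - s)).comp b ((hasDerivAt_id b).sub_const s)
    have hB : HasDerivAt (fun b' => f (b' + s)) (deriv f (b + s) * 1) b :=
      (hdf (b + s)).comp b ((hasDerivAt_id b).add_const s)
    exact (hA.add hB).deriv
  refine ⟨eta1_smooth hf, q1_smooth hf hf0, fun s b hU => ⟨hqs s b hU, hqb s b hU⟩, ?_⟩
  refine ⟨eta1_smooth hf, q1_smooth hf hf0, ?_, ?_⟩
  · intro s b hU
    obtain ⟨h1, h2⟩ := U_facts hU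
    have hden : b ^ 2 - s ^ 2 ≠ 0 := by nlinarith
    rw [hqs s b hU, hes s b, heb s b]
    field_simp [ne_of_gt h1, ne_of_lt h2, hden]
    ring
  · intro s b hU
    obtain ⟨h1, h2⟩ := U_facts hU
    have hden : b ^ 2 - s ^ 2 ≠ 0 := by nlinarith
    rw [hqb s b hU, hes s b, heb s b]
    field_simp [ne_of_gt h1, ne_of_lt h2, hden]
    ring
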